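/- $\lim_{e_1 \to +\infty} e_1^{-1/2} J_+(e_1,0) = \int_0^1 \frac{g\,dg}{\sqrt{\frac{2}{3}(1-g)g(g+1)}} = \frac{\sqrt{\frac{2}{3}\pi}\,\Gamma(7/4)}{\Gamma(5/4)}$. -/

import Mathlib

open Real Set Filter

section Aux
open MeasureTheory intervalIntegral

-- beta integral in real form
lemma beta_real : ∫ x in (0:ℝ)..1, x ^ (-(1/4):ℝ) * (1-x) ^ (-(1/2):ℝ) =
    Real.Gamma (3/4) * Real.Gamma (1/2) / Real.Gamma (5/4) := by
  have hB := Complex.Gamma_mul_Gamma_eq_betaIntegral (s := 3/4) (t := 1/2)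
    (by norm_num) (by norm_num)
  have hnorm : (3/4 : ℂ) + 1/2 = 5/4 := by norm_num
  rw [hnorm] at hB
  have hre : Complex.betaIntegral (3/4) (1/2) =
      ((∫ x in (0:ℝ)..1, x ^ (-(1/4):ℝ) * (1-x) ^ (-(1/2):ℝ) : ℝ) : ℂ) := by
    rw [Complex.betaIntegral, ← intervalIntegral.integral_ofReal]
    refine intervalIntegral.integral_congr fun x hx => ?_
    rw [uIcc_of_le (by norm_num)] at hx
    push_cast
    rw [Complex.ofReal_cpow hx.1, Complex.ofReal_cpow (by linarith [hx.2] : (0:ℝ) ≤ 1 - x)]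
    norm_num
  rw [hre] at hB
  have h34 : Complex.Gamma (3/4) = (Real.Gamma (3/4) : ℂ) := by
    rw [← Complex.Gamma_ofReal]; norm_num
  have h12 : Complex.Gamma (1/2) = (Real.Gamma (1/2) : ℂ) := by
    rw [← Complex.Gamma_ofReal]; norm_num
  have h54 : Complex.Gamma (5/4) = (Real.Gamma (5/4) : ℂ) := by
    rw [← Complex.Gamma_ofReal]; norm_num
  rw [h34, h12, h54] at hB
  have hpos : Real.Gamma (5/4) ≠ 0 := (Real.Gamma_pos_of_pos (by norm_num)).ne'
  rw [eq_div_iff hpos, mul_comm]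
  exact_mod_cast hB.symm

lemma subst_sq : ∫ g in (0:ℝ)..1, g / Real.sqrt ((2/3) * (1 - g) * g * (g + 1)) =
    (Real.sqrt (3/2) / 2) * ∫ x in (0:ℝ)..1, x ^ (-(1/4):ℝ) * (1-x) ^ (-(1/2):ℝ) := by
  have himg : (fun x : ℝ => x^2) '' Ioo 0 1 = Ioo 0 1 := by
    ext u
    constructor
    · rintro ⟨x, hx, rfl⟩
      simp only [mem_Ioo]
      exact ⟨pow_pos hx.1 2, by nlinarith [hx.1, hx.2]⟩
    · rintro ⟨hu0, hu1⟩
      exact ⟨Real.sqrt u, ⟨Real.sqrt_pos.mpr hu0,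
        by simpa using Real.sqrt_lt_sqrt hu0.le hu1⟩,
        by simp [sq, Real.mul_self_sqrt hu0.le]⟩
  have hder : ∀ x ∈ Ioo (0:ℝ) 1, HasDerivWithinAt (fun x : ℝ => x^2) (2*x) (Ioo 0 1) x := by
    intro x _
    simpa using (hasDerivAt_pow 2 x).hasDerivWithinAt
  have hinj : InjOn (fun x : ℝ => x^2) (Ioo 0 1) := by
    intro a ha b hb h
    simp only at h
    nlinarith [ha.1, hb.1]
  have hCV := integral_image_eq_integral_abs_deriv_smul measurableSet_Ioo hder hinj
    (fun u => u ^ (-(1/4):ℝ) * (1-u) ^ (-(1/2):ℝ))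
  rw [himg] at hCV
  have hpt : ∀ x ∈ Ioo (0:ℝ) 1,
      |2*x| • ((x^2) ^ (-(1/4):ℝ) * (1-x^2) ^ (-(1/2):ℝ)) =
        (2 * Real.sqrt (2/3)) * (x / Real.sqrt ((2/3) * (1 - x) * x * (x + 1))) := by
    intro x hx
    obtain ⟨hx0, hx1⟩ := hx
    have h1 : ((x^2) : ℝ) ^ (-(1/4):ℝ) = (Real.sqrt x)⁻¹ := by
      rw [← Real.rpow_natCast x 2, ← Real.rpow_mul hx0.le,
        show ((2:ℕ):ℝ) * (-(1/4)) = -(1/2) by norm_num,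
        Real.rpow_neg hx0.le, ← Real.sqrt_eq_rpow]
    have h2 : ((1 - x^2) : ℝ) ^ (-(1/2):ℝ) = (Real.sqrt (1-x^2))⁻¹ := by
      rw [Real.rpow_neg (by nlinarith), ← Real.sqrt_eq_rpow]
    have h3 : Real.sqrt ((2/3) * (1 - x) * x * (x + 1)) =
        Real.sqrt (2/3) * (Real.sqrt x * Real.sqrt (1-x^2)) := by
      rw [show (2/3) * (1-x) * x * (x+1) = (2/3) * (x * (1-x^2)) by ring,
        Real.sqrt_mul (by norm_num), Real.sqrt_mul hx0.le]
    have hsx : Real.sqrt x ≠ 0 := (Real.sqrt_pos.mpr hx0).ne'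
    have h1x2 : Real.sqrt (1-x^2) ≠ 0 := (Real.sqrt_pos.mpr (by nlinarith)).ne'
    have hs23 : Real.sqrt (2/3) ≠ 0 := (Real.sqrt_pos.mpr (by norm_num)).ne'
    have hxx : Real.sqrt x * Real.sqrt x = x := Real.mul_self_sqrt hx0.le
    rw [h1, h2, h3, abs_of_pos (by linarith), smul_eq_mul]
    have hxx' : Real.sqrt x ^ 2 = x := Real.sq_sqrt hx0.le
    field_simp
  have hset : ∫ u in Ioo (0:ℝ) 1, u ^ (-(1/4):ℝ) * (1-u) ^ (-(1/2):ℝ) =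
      (2 * Real.sqrt (2/3)) * ∫ x in Ioo (0:ℝ) 1, x / Real.sqrt ((2/3) * (1 - x) * x * (x + 1)) := by
    rw [hCV, ← MeasureTheory.integral_const_mul]
    exact MeasureTheory.setIntegral_congr_fun measurableSet_Ioo hpt
  have hconv : ∀ f : ℝ → ℝ, ∫ x in (0:ℝ)..1, f x = ∫ x in Ioo (0:ℝ) 1, f x := by
    intro f
    rw [intervalIntegral.integral_of_le (by norm_num), MeasureTheory.integral_Ioc_eq_integral_Ioo]
  rw [hconv, hconv, hset, ← mul_assoc]
  have h1 : Real.sqrt (3/2) * Real.sqrt (2/3) = 1 := by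
    rw [← Real.sqrt_mul (by norm_num : (0:ℝ) ≤ 3/2)]
    norm_num
  have : Real.sqrt (3/2) / 2 * (2 * Real.sqrt (2/3)) = 1 := by linear_combination h1
  rw [this, one_mul]

noncomputable def F0 (x : ℝ) : ℝ := x / Real.sqrt ((2/3) * (1 - x) * x * (x + 1))

lemma measF0 : Measurable F0 :=
  measurable_id.div ((Real.continuous_sqrt.comp (by continuity)).measurable)

lemma sqrt_one_mul : Real.sqrt (3/2) * Real.sqrt (2/3) = 1 := by
  rw [← Real.sqrt_mul (by norm_num : (0:ℝ) ≤ 3/2)]; norm_num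

lemma bound_ineq : ∀ x ∈ Ioc (0:ℝ) 1, F0 x ≤ Real.sqrt (3/2) * (1-x) ^ (-(1/2):ℝ) := by
  intro x hx
  obtain ⟨hx0, hx1⟩ := hx
  rcases eq_or_lt_of_le hx1 with h1 | h1
  · subst h1
    simp [F0, Real.zero_rpow (by norm_num : (-(1/2):ℝ) ≠ 0)]
  · have hfac : Real.sqrt ((2/3)*(1-x)*x*(x+1)) =
        Real.sqrt (2/3) * (Real.sqrt (1-x) * Real.sqrt (x*(x+1))) := by
      rw [show (2/3)*(1-x)*x*(x+1) = (2/3)*((1-x)*(x*(x+1))) by ring,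
        Real.sqrt_mul (by norm_num), Real.sqrt_mul (by linarith)]
    have hpos : 0 < Real.sqrt ((2/3)*(1-x)*x*(x+1)) :=
      Real.sqrt_pos.mpr (by nlinarith [mul_pos (mul_pos hx0 (sub_pos.mpr h1)) (by linarith : (0:ℝ) < x + 1)])
    have h1x : Real.sqrt (1-x) ≠ 0 := (Real.sqrt_pos.mpr (by linarith)).ne'
    rw [F0, Real.rpow_neg (by linarith), ← Real.sqrt_eq_rpow, div_le_iff₀ hpos, hfac]
    have key : Real.sqrt (3/2) * (Real.sqrt (1-x))⁻¹ *
        (Real.sqrt (2/3) * (Real.sqrt (1-x) * Real.sqrt (x*(x+1)))) =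
        Real.sqrt (x*(x+1)) := by
      rw [show Real.sqrt (3/2) * (Real.sqrt (1-x))⁻¹ *
          (Real.sqrt (2/3) * (Real.sqrt (1-x) * Real.sqrt (x*(x+1)))) =
          (Real.sqrt (3/2) * Real.sqrt (2/3)) * ((Real.sqrt (1-x))⁻¹ * Real.sqrt (1-x)) *
          Real.sqrt (x*(x+1)) by ring, sqrt_one_mul, inv_mul_cancel₀ h1x]
      ring
    rw [key]
    calc x = Real.sqrt (x^2) := (Real.sqrt_sq hx0.le).symm
      _ ≤ Real.sqrt (x*(x+1)) := Real.sqrt_le_sqrt (by nlinarith)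

lemma integrable_bound :
    IntervalIntegrable (fun x => Real.sqrt (3/2) * (1-x) ^ (-(1/2):ℝ)) volume 0 1 := by
  have h := (intervalIntegrable_rpow' (a := 0) (b := 1) (r := -(1/2))
    (by norm_num)).comp_sub_left 1
  simpa using (h.const_mul (Real.sqrt (3/2))).symm

lemma integrable_F0 : IntervalIntegrable F0 volume 0 1 := by
  apply integrable_bound.mono_fun' measF0.aestronglyMeasurable
  rw [Filter.EventuallyLE, ae_restrict_iff' measurableSet_uIoc]
  refine Filter.Eventually.of_forall fun x hx => ?_
  rw [uIoc_of_le (by norm_num : (0:ℝ) ≤ 1)] at hx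
  have h0 : 0 ≤ F0 x := div_nonneg hx.1.le (Real.sqrt_nonneg _)
  rw [Real.norm_eq_abs, abs_of_nonneg h0]
  exact bound_ineq x hx

lemma tendsto_main :
    Tendsto (fun e1 : ℝ => ∫ g in (0:ℝ)..1, g / Real.sqrt ((2/3) * (1 - g) * g * (g + 6/e1 + 1)))
      atTop (nhds (∫ g in (0:ℝ)..1, g / Real.sqrt ((2/3) * (1 - g) * g * (g + 1)))) := by
  have hF0 : (∫ g in (0:ℝ)..1, g / Real.sqrt ((2/3) * (1 - g) * g * (g + 1))) =
      ∫ g in (0:ℝ)..1, F0 g := rfl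
  rw [hF0]
  apply intervalIntegral.tendsto_integral_filter_of_dominated_convergence F0
  · refine Filter.Eventually.of_forall fun e1 => ?_
    exact (measurable_id.div ((Real.continuous_sqrt.comp (by continuity)).measurable)).aestronglyMeasurable
  · filter_upwards [eventually_gt_atTop (0:ℝ)] with e1 he1
    refine Filter.Eventually.of_forall fun x hx => ?_
    rw [uIoc_of_le (by norm_num : (0:ℝ) ≤ 1)] at hx
    obtain ⟨hx0, hx1⟩ := hx
    have h6 : 0 ≤ 6 / e1 := by positivity
    rcases eq_or_lt_of_le hx1 with h1 | h1
    · subst h1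
      have : (2/3 : ℝ) * (1 - 1) * 1 * (1 + 6/e1 + 1) = 0 := by ring
      simp [this, F0]
    · have harg0 : (0:ℝ) < (2/3) * (1 - x) * x * (x + 1) := by
        nlinarith [mul_pos (mul_pos hx0 (sub_pos.mpr h1)) (by linarith : (0:ℝ) < x + 1)]
      have hle : (2/3) * (1 - x) * x * (x + 1) ≤ (2/3) * (1 - x) * x * (x + 6/e1 + 1) := by
        nlinarith [mul_pos hx0 (sub_pos.mpr h1)]
      have hnn : 0 ≤ x / Real.sqrt ((2/3) * (1 - x) * x * (x + 6/e1 + 1)) :=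
        div_nonneg hx0.le (Real.sqrt_nonneg _)
      rw [Real.norm_eq_abs, abs_of_nonneg hnn]
      exact div_le_div_of_nonneg_left hx0.le (Real.sqrt_pos.mpr harg0)
        (Real.sqrt_le_sqrt hle)
  · exact integrable_F0
  · refine Filter.Eventually.of_forall fun x hx => ?_
    rw [uIoc_of_le (by norm_num : (0:ℝ) ≤ 1)] at hx
    obtain ⟨hx0, hx1⟩ := hx
    rcases eq_or_lt_of_le hx1 with h1 | h1
    · subst h1
      have hz : ∀ e1 : ℝ, (1:ℝ) / Real.sqrt ((2/3) * (1 - 1) * 1 * (1 + 6/e1 + 1)) = 0 := by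
        intro e1
        have : (2/3 : ℝ) * (1 - 1) * 1 * (1 + 6/e1 + 1) = 0 := by ring
        simp [this]
      have hF01 : F0 1 = 0 := by
        simp [F0]
      rw [hF01]
      exact Tendsto.congr (fun e1 => (hz e1).symm) tendsto_const_nhds
    · have harg0 : (0:ℝ) < (2/3) * (1 - x) * x * (x + 1) := by
        nlinarith [mul_pos (mul_pos hx0 (sub_pos.mpr h1)) (by linarith : (0:ℝ) < x + 1)]
      have h6 : Tendsto (fun e1 : ℝ => 6 / e1) atTop (nhds 0) :=
        tendsto_const_nhds.div_atTop tendsto_id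
      have harg : Tendsto (fun e1 : ℝ => (2/3) * (1 - x) * x * (x + 6/e1 + 1)) atTop
          (nhds ((2/3) * (1 - x) * x * (x + 1))) := by
        have := (((h6.const_add x).add_const 1).const_mul ((2/3) * (1 - x) * x))
        simpa [add_zero] using this
      have hsq : Tendsto (fun e1 : ℝ => Real.sqrt ((2/3) * (1 - x) * x * (x + 6/e1 + 1))) atTop
          (nhds (Real.sqrt ((2/3) * (1 - x) * x * (x + 1)))) :=
        (Real.continuous_sqrt.continuousAt.tendsto).comp harg
      exact tendsto_const_nhds.div hsq (Real.sqrt_pos.mpr harg0).ne'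

lemma pointwise_cov {e1 : ℝ} (he1 : 0 < e1) (g : ℝ) :
    (Real.sqrt e1)⁻¹ * e1 *
      ((e1 * g) / Real.sqrt (-(2/3) * (e1 * g - e1) * (e1 * g) * (e1 * g + 6 + e1))) =
    g / Real.sqrt ((2/3) * (1 - g) * g * (g + 6/e1 + 1)) := by
  have hne : e1 ≠ 0 := he1.ne'
  have hq : -(2/3) * (e1 * g - e1) * (e1 * g) * (e1 * g + 6 + e1) =
      e1^3 * ((2/3) * (1 - g) * g * (g + 6/e1 + 1)) := by
    field_simp
    ring
  have hs3 : Real.sqrt (e1^3) = e1 * Real.sqrt e1 := by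
    rw [show e1^3 = e1^2 * e1 by ring, Real.sqrt_mul (sq_nonneg e1), Real.sqrt_sq he1.le]
  rw [hq, Real.sqrt_mul (by positivity : (0:ℝ) ≤ e1^3), hs3]
  set s := Real.sqrt ((2/3) * (1 - g) * g * (g + 6/e1 + 1)) with hs_def
  by_cases hs : s = 0
  · simp [hs]
  · have hse : Real.sqrt e1 ≠ 0 := (Real.sqrt_pos.mpr he1).ne'
    have hss : Real.sqrt e1 * Real.sqrt e1 = e1 := Real.mul_self_sqrt he1.le
    field_simp
    linear_combination (-g) * hss

lemma eventual_eq : ∀ᶠ e1 : ℝ in atTop,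
    (∫ g in (0:ℝ)..1, g / Real.sqrt ((2/3) * (1 - g) * g * (g + 6/e1 + 1))) =
    (Real.sqrt e1)⁻¹ *
      ∫ f in (0:ℝ)..e1, f / Real.sqrt (-(2/3) * (f - e1) * f * (f + 6 + e1)) := by
  filter_upwards [eventually_gt_atTop (0:ℝ)] with e1 he1
  have hsub : e1 • (∫ g in (0:ℝ)..1,
      (e1 * g) / Real.sqrt (-(2/3) * (e1 * g - e1) * (e1 * g) * (e1 * g + 6 + e1))) =
      ∫ f in (0:ℝ)..e1, f / Real.sqrt (-(2/3) * (f - e1) * f * (f + 6 + e1)) := by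
    have := intervalIntegral.smul_integral_comp_mul_left
      (f := fun f => f / Real.sqrt (-(2/3) * (f - e1) * f * (f + 6 + e1)))
      (a := 0) (b := 1) e1
    rw [mul_zero, mul_one] at this
    exact this
  rw [← hsub, smul_eq_mul, ← mul_assoc, ← intervalIntegral.integral_const_mul]
  refine (intervalIntegral.integral_congr fun g _ => ?_).symm
  exact pointwise_cov he1 g

lemma eval_final : (∫ g in (0:ℝ)..1, g / Real.sqrt ((2/3) * (1 - g) * g * (g + 1))) =
    Real.sqrt ((2/3) * π) * Real.Gamma (7/4) / Real.Gamma (5/4) := by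
  have h74 : Real.Gamma (7/4) = (3/4) * Real.Gamma (3/4) := by
    rw [show (7:ℝ)/4 = 3/4 + 1 by norm_num, Real.Gamma_add_one (by norm_num)]
  have hpos : Real.Gamma (5/4) ≠ 0 := (Real.Gamma_pos_of_pos (by norm_num)).ne'
  have e32 : Real.sqrt (3/2) = (3/2) * Real.sqrt (2/3) := by
    rw [show (3:ℝ)/2 = ((3/2)^2 * (2/3) : ℝ) by norm_num, Real.sqrt_mul (by positivity),
      Real.sqrt_sq (by norm_num : (0:ℝ) ≤ 3/2)]
    norm_num
  rw [subst_sq, beta_real, Real.Gamma_one_half_eq, h74,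
    Real.sqrt_mul (by norm_num : (0:ℝ) ≤ 2/3) π, e32]
  field_simp
  ring

end Aux

/-- `lim_{e1 → ∞} e1^{-1/2} · J₊(e1, 0) = ∫₀¹ g dg/√((2/3)(1-g)g(g+1))
    = √((2/3)π) Γ(7/4)/Γ(5/4)`. -/
theorem inv_sqrt_mul_Jplus_zero_tendsto :
    Filter.Tendsto
      (fun e1 : ℝ =>
        (Real.sqrt e1)⁻¹ *
          ∫ f in (0:ℝ)..e1,
            f / Real.sqrt (-(2/3) * (f - e1) * f * (f + 6 + e1)))
      Filter.atTop
      (nhds (∫ g in (0:ℝ)..1, g / Real.sqrt ((2/3) * (1 - g) * g * (g + 1)))) ∧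
    (∫ g in (0:ℝ)..1, g / Real.sqrt ((2/3) * (1 - g) * g * (g + 1))) =
      Real.sqrt ((2/3) * π) * Real.Gamma (7/4) / Real.Gamma (5/4) := by
  exact ⟨tendsto_main.congr' eventual_eq, eval_final⟩
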